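/- Let (Ω, μ) be a measure space, let p be a real number with 1 ≤ p < ∞ and p ≠ 2, and let f, g ∈ L^p(μ) be complex-valued. Then f and g have almost disjoint supports (i.e., f·g = 0 almost everywhere) if and only if ‖f + g‖_p^p + ‖f − g‖_p^p = 2(‖f‖_p^p + ‖g‖_p^p). -/

import Mathlib

open MeasureTheory

private lemma mul_rpow_pred {r x : ℝ} (hx : 0 < x) : x * x ^ (r - 1) = x ^ r := by
  nth_rewrite 1 [← Real.rpow_one x]
  rw [← Real.rpow_add hx]
  norm_num

private lemma rpow_subadd_strict {r u v : ℝ} (hr0 : 0 < r) (hr1 : r < 1)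
    (hu : 0 < u) (hv : 0 < v) : (u + v) ^ r < u ^ r + v ^ r := by
  have huv : 0 < u + v := by linarith
  have h1 : (u + v) ^ (r - 1) < u ^ (r - 1) :=
    Real.rpow_lt_rpow_of_neg hu (by linarith) (by linarith)
  have h2 : (u + v) ^ (r - 1) < v ^ (r - 1) :=
    Real.rpow_lt_rpow_of_neg hv (by linarith) (by linarith)
  calc (u + v) ^ r = u * (u + v) ^ (r - 1) + v * (u + v) ^ (r - 1) := by
        rw [← add_mul, mul_rpow_pred huv]
    _ < u * u ^ (r - 1) + v * v ^ (r - 1) := by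
        have := mul_lt_mul_of_pos_left h1 hu
        have := mul_lt_mul_of_pos_left h2 hv
        linarith
    _ = u ^ r + v ^ r := by rw [mul_rpow_pred hu, mul_rpow_pred hv]

private lemma rpow_superadd_strict {r u v : ℝ} (hr1 : 1 < r)
    (hu : 0 < u) (hv : 0 < v) : u ^ r + v ^ r < (u + v) ^ r := by
  have huv : 0 < u + v := by linarith
  have h1 : u ^ (r - 1) < (u + v) ^ (r - 1) :=
    Real.rpow_lt_rpow hu.le (by linarith) (by linarith)
  have h2 : v ^ (r - 1) < (u + v) ^ (r - 1) :=
    Real.rpow_lt_rpow hv.le (by linarith) (by linarith)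
  calc u ^ r + v ^ r = u * u ^ (r - 1) + v * v ^ (r - 1) := by
        rw [mul_rpow_pred hu, mul_rpow_pred hv]
    _ < u * (u + v) ^ (r - 1) + v * (u + v) ^ (r - 1) := by
        have := mul_lt_mul_of_pos_left h1 hu
        have := mul_lt_mul_of_pos_left h2 hv
        linarith
    _ = (u + v) ^ r := by rw [← add_mul, mul_rpow_pred huv]

private lemma midpoint_concave {r x y : ℝ} (hr0 : 0 ≤ r) (hr1 : r ≤ 1)
    (hx : 0 ≤ x) (hy : 0 ≤ y) : x ^ r + y ^ r ≤ 2 * ((x + y) / 2) ^ r := by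
  have h := (Real.concaveOn_rpow hr0 hr1).2 (Set.mem_Ici.2 hx) (Set.mem_Ici.2 hy)
    (by norm_num : (0:ℝ) ≤ 1/2) (by norm_num : (0:ℝ) ≤ 1/2) (by norm_num)
  simp only [smul_eq_mul] at h
  have e : (1/2 : ℝ) * x + (1/2 : ℝ) * y = (x + y) / 2 := by ring
  rw [e] at h
  linarith

private lemma midpoint_convex {r x y : ℝ} (hr1 : 1 ≤ r)
    (hx : 0 ≤ x) (hy : 0 ≤ y) : 2 * ((x + y) / 2) ^ r ≤ x ^ r + y ^ r := by
  have h := (convexOn_rpow hr1).2 (Set.mem_Ici.2 hx) (Set.mem_Ici.2 hy)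
    (by norm_num : (0:ℝ) ≤ 1/2) (by norm_num : (0:ℝ) ≤ 1/2) (by norm_num)
  simp only [smul_eq_mul] at h
  have e : (1/2 : ℝ) * x + (1/2 : ℝ) * y = (x + y) / 2 := by ring
  rw [e] at h
  linarith

private lemma norm_rpow_normSq (p : ℝ) (x : ℂ) : ‖x‖ ^ p = Complex.normSq x ^ (p / 2) := by
  rw [Complex.normSq_eq_norm_sq, ← Real.rpow_natCast ‖x‖ 2,
    ← Real.rpow_mul (norm_nonneg x)]
  congr 1
  ring

private lemma normSq_eq_norm_sq (x : ℂ) : Complex.normSq x = ‖x‖ ^ 2 := by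
  rw [Complex.normSq_eq_norm_sq]

private lemma re_le (z w : ℂ) : |(z * (starRingEnd ℂ) w).re| ≤ ‖z‖ * ‖w‖ := by
  calc |(z * (starRingEnd ℂ) w).re| ≤ ‖z * (starRingEnd ℂ) w‖ :=
        Complex.abs_re_le_norm _
    _ = ‖z‖ * ‖w‖ := by
        rw [norm_mul, Complex.norm_conj]

private lemma core_lt {r a b t : ℝ} (hr0 : 0 < r) (hr1 : r < 1) (ha : 0 < a) (hb : 0 < b)
    (ht : |t| ≤ a * b) :
    (a^2 + b^2 + 2*t) ^ r + (a^2 + b^2 - 2*t) ^ r < 2 * ((a^2) ^ r + (b^2) ^ r) := by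
  have habs := abs_le.1 ht
  have hx : (0:ℝ) ≤ a^2 + b^2 + 2*t := by nlinarith [sq_nonneg (a - b)]
  have hy : (0:ℝ) ≤ a^2 + b^2 - 2*t := by nlinarith [sq_nonneg (a - b)]
  have h1 := midpoint_concave hr0.le hr1.le hx hy
  have e : (a^2 + b^2 + 2*t + (a^2 + b^2 - 2*t)) / 2 = a^2 + b^2 := by ring
  rw [e] at h1
  have h2 : (a^2 + b^2) ^ r < (a^2) ^ r + (b^2) ^ r :=
    rpow_subadd_strict hr0 hr1 (by positivity) (by positivity)
  linarith

private lemma core_gt {r a b t : ℝ} (hr1 : 1 < r) (ha : 0 < a) (hb : 0 < b)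
    (ht : |t| ≤ a * b) :
    2 * ((a^2) ^ r + (b^2) ^ r) < (a^2 + b^2 + 2*t) ^ r + (a^2 + b^2 - 2*t) ^ r := by
  have habs := abs_le.1 ht
  have hx : (0:ℝ) ≤ a^2 + b^2 + 2*t := by nlinarith [sq_nonneg (a - b)]
  have hy : (0:ℝ) ≤ a^2 + b^2 - 2*t := by nlinarith [sq_nonneg (a - b)]
  have h1 := midpoint_convex hr1.le hx hy
  have e : (a^2 + b^2 + 2*t + (a^2 + b^2 - 2*t)) / 2 = a^2 + b^2 := by ring
  rw [e] at h1
  have h2 : (a^2) ^ r + (b^2) ^ r < (a^2 + b^2) ^ r :=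
    rpow_superadd_strict hr1 (by positivity) (by positivity)
  linarith

/-- Rewrite the four norms in terms of normSq data. -/
private lemma expand (p : ℝ) (z w : ℂ) :
    ‖z + w‖ ^ p + ‖z - w‖ ^ p =
      (‖z‖^2 + ‖w‖^2 + 2 * (z * (starRingEnd ℂ) w).re) ^ (p/2)
      + (‖z‖^2 + ‖w‖^2 - 2 * (z * (starRingEnd ℂ) w).re) ^ (p/2) ∧
    2 * (‖z‖ ^ p + ‖w‖ ^ p) = 2 * ((‖z‖^2) ^ (p/2) + (‖w‖^2) ^ (p/2)) := by
  constructor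
  · rw [norm_rpow_normSq p (z + w), norm_rpow_normSq p (z - w),
      Complex.normSq_add, Complex.normSq_sub, normSq_eq_norm_sq, normSq_eq_norm_sq]
  · rw [norm_rpow_normSq p z, norm_rpow_normSq p w, normSq_eq_norm_sq, normSq_eq_norm_sq]

private lemma pointwise_strict_lt {p : ℝ} (hp1 : 1 ≤ p) (hp : p < 2) {z w : ℂ}
    (hz : z ≠ 0) (hw : w ≠ 0) :
    ‖z + w‖ ^ p + ‖z - w‖ ^ p < 2 * (‖z‖ ^ p + ‖w‖ ^ p) := by
  obtain ⟨e1, e2⟩ := expand p z w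
  rw [e1, e2]
  exact core_lt (by linarith) (by linarith) (norm_pos_iff.2 hz) (norm_pos_iff.2 hw) (re_le z w)

private lemma pointwise_strict_gt {p : ℝ} (hp : 2 < p) {z w : ℂ}
    (hz : z ≠ 0) (hw : w ≠ 0) :
    2 * (‖z‖ ^ p + ‖w‖ ^ p) < ‖z + w‖ ^ p + ‖z - w‖ ^ p := by
  obtain ⟨e1, e2⟩ := expand p z w
  rw [e1, e2]
  exact core_gt (by linarith) (norm_pos_iff.2 hz) (norm_pos_iff.2 hw) (re_le z w)

private lemma pointwise_eq {p : ℝ} (hp0 : p ≠ 0) {z w : ℂ} (h : z * w = 0) :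
    ‖z + w‖ ^ p + ‖z - w‖ ^ p = 2 * (‖z‖ ^ p + ‖w‖ ^ p) := by
  rcases mul_eq_zero.1 h with rfl | rfl
  · simp [Real.zero_rpow hp0]
    ring
  · simp [Real.zero_rpow hp0]
    ring

private lemma pointwise_le {p : ℝ} (hp1 : 1 ≤ p) (hp : p < 2) (z w : ℂ) :
    ‖z + w‖ ^ p + ‖z - w‖ ^ p ≤ 2 * (‖z‖ ^ p + ‖w‖ ^ p) := by
  by_cases hz : z = 0
  · exact le_of_eq (pointwise_eq (by linarith) (by simp [hz]))
  by_cases hw : w = 0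
  · exact le_of_eq (pointwise_eq (by linarith) (by simp [hw]))
  exact (pointwise_strict_lt hp1 hp hz hw).le

private lemma pointwise_ge {p : ℝ} (hp1 : 1 ≤ p) (hp : 2 < p) (z w : ℂ) :
    2 * (‖z‖ ^ p + ‖w‖ ^ p) ≤ ‖z + w‖ ^ p + ‖z - w‖ ^ p := by
  by_cases hz : z = 0
  · exact ge_of_eq (pointwise_eq (by linarith) (by simp [hz]))
  by_cases hw : w = 0
  · exact ge_of_eq (pointwise_eq (by linarith) (by simp [hw]))
  exact (pointwise_strict_gt hp hz hw).le

private lemma pointwise_converse {p : ℝ} (hp1 : 1 ≤ p) (hp2 : p ≠ 2) {z w : ℂ}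
    (h : ‖z + w‖ ^ p + ‖z - w‖ ^ p = 2 * (‖z‖ ^ p + ‖w‖ ^ p)) : z * w = 0 := by
  by_contra hzw
  obtain ⟨hz, hw⟩ := mul_ne_zero_iff.1 hzw
  rcases lt_or_gt_of_ne hp2 with hlt | hgt
  · exact absurd h (pointwise_strict_lt hp1 hlt hz hw).ne
  · exact absurd h.symm (pointwise_strict_gt hgt hz hw).ne

private lemma norm_pow_eq {Ω : Type*} [MeasurableSpace Ω] {μ : Measure Ω} {p : ℝ}
    (hp1 : 1 ≤ p) (h : Lp ℂ (ENNReal.ofReal p) μ) :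
    ‖h‖ ^ p = ∫ ω, ‖h ω‖ ^ p ∂μ := by
  have hp0 : (0:ℝ) < p := by linarith
  have hq0 : ENNReal.ofReal p ≠ 0 := by simp [ENNReal.ofReal_eq_zero]; linarith
  have hqt : ENNReal.ofReal p ≠ ⊤ := ENNReal.ofReal_ne_top
  have h1 := (Lp.memLp h).eLpNorm_eq_integral_rpow_norm hq0 hqt
  simp only [ENNReal.toReal_ofReal hp0.le] at h1
  have hI : 0 ≤ ∫ ω, ‖h ω‖ ^ p ∂μ :=
    integral_nonneg fun ω => Real.rpow_nonneg (norm_nonneg _) _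
  rw [Lp.norm_def, h1, ENNReal.toReal_ofReal (Real.rpow_nonneg hI _),
    ← Real.rpow_mul hI, inv_mul_cancel₀ hp0.ne', Real.rpow_one]

private lemma integrable_norm_pow {Ω : Type*} [MeasurableSpace Ω] {μ : Measure Ω} {p : ℝ}
    (hp1 : 1 ≤ p) (h : Lp ℂ (ENNReal.ofReal p) μ) :
    Integrable (fun ω => ‖h ω‖ ^ p) μ := by
  have hp0 : (0:ℝ) < p := by linarith
  have hq0 : ENNReal.ofReal p ≠ 0 := by simp [ENNReal.ofReal_eq_zero]; linarith
  have := (Lp.memLp h).integrable_norm_rpow hq0 ENNReal.ofReal_ne_top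
  simpa [ENNReal.toReal_ofReal hp0.le] using this

/-- For 1 ≤ p < ∞, p ≠ 2, two functions f, g ∈ L^p(μ) have almost disjoint
supports (f·g = 0 a.e.) iff ‖f+g‖_p^p + ‖f-g‖_p^p = 2(‖f‖_p^p + ‖g‖_p^p). -/
theorem Lp_almost_disjoint_supports_iff_norm_identity
    {Ω : Type*} [MeasurableSpace Ω] (μ : Measure Ω)
    (p : ℝ) (hp1 : 1 ≤ p) (hp2 : p ≠ 2)
    (f g : Lp ℂ (ENNReal.ofReal p) μ) :
    (∀ᵐ ω ∂μ, f ω * g ω = 0) ↔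
      ‖f + g‖ ^ p + ‖f - g‖ ^ p = 2 * (‖f‖ ^ p + ‖g‖ ^ p) := by
  have hp0 : p ≠ 0 := by intro h; rw [h] at hp1; norm_num at hp1
  have hadd : (fun ω => ‖(f + g : Lp ℂ (ENNReal.ofReal p) μ) ω‖ ^ p)
      =ᵐ[μ] fun ω => ‖f ω + g ω‖ ^ p := by
    filter_upwards [Lp.coeFn_add f g] with ω hω
    rw [hω]; rfl
  have hsub : (fun ω => ‖(f - g : Lp ℂ (ENNReal.ofReal p) μ) ω‖ ^ p)
      =ᵐ[μ] fun ω => ‖f ω - g ω‖ ^ p := by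
    filter_upwards [Lp.coeFn_sub f g] with ω hω
    rw [hω]; rfl
  have i1 : Integrable (fun ω => ‖f ω + g ω‖ ^ p) μ :=
    (integrable_norm_pow hp1 (f + g)).congr hadd
  have i2 : Integrable (fun ω => ‖f ω - g ω‖ ^ p) μ :=
    (integrable_norm_pow hp1 (f - g)).congr hsub
  have i3 : Integrable (fun ω => ‖f ω‖ ^ p) μ := integrable_norm_pow hp1 f
  have i4 : Integrable (fun ω => ‖g ω‖ ^ p) μ := integrable_norm_pow hp1 g
  have iS : Integrable (fun ω => ‖f ω + g ω‖ ^ p + ‖f ω - g ω‖ ^ p) μ := i1.add i2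
  have iT : Integrable (fun ω => 2 * (‖f ω‖ ^ p + ‖g ω‖ ^ p)) μ := (i3.add i4).const_mul 2
  have e1 : ‖f + g‖ ^ p = ∫ ω, ‖f ω + g ω‖ ^ p ∂μ := by
    rw [norm_pow_eq hp1 (f + g)]; exact integral_congr_ae hadd
  have e2 : ‖f - g‖ ^ p = ∫ ω, ‖f ω - g ω‖ ^ p ∂μ := by
    rw [norm_pow_eq hp1 (f - g)]; exact integral_congr_ae hsub
  have e3 : ‖f‖ ^ p = ∫ ω, ‖f ω‖ ^ p ∂μ := norm_pow_eq hp1 f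
  have e4 : ‖g‖ ^ p = ∫ ω, ‖g ω‖ ^ p ∂μ := norm_pow_eq hp1 g
  constructor
  · intro hae
    have key : ∫ ω, (‖f ω + g ω‖ ^ p + ‖f ω - g ω‖ ^ p) ∂μ
        = ∫ ω, (2 * (‖f ω‖ ^ p + ‖g ω‖ ^ p)) ∂μ :=
      integral_congr_ae (hae.mono fun ω hω => by
        simpa using pointwise_eq hp0 hω)
    rw [integral_add i1 i2, integral_const_mul, integral_add i3 i4] at key
    rw [e1, e2, e3, e4]
    linarith
  · intro hnorm
    rcases lt_or_gt_of_ne hp2 with hlt | hgt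
    · have hD : Integrable
          (fun ω => 2 * (‖f ω‖ ^ p + ‖g ω‖ ^ p) - (‖f ω + g ω‖ ^ p + ‖f ω - g ω‖ ^ p)) μ :=
        iT.sub iS
      have hDnn : 0 ≤ fun ω =>
          2 * (‖f ω‖ ^ p + ‖g ω‖ ^ p) - (‖f ω + g ω‖ ^ p + ‖f ω - g ω‖ ^ p) :=
        fun ω => sub_nonneg.2 (pointwise_le hp1 hlt (f ω) (g ω))
      have hDint : ∫ ω,
          (2 * (‖f ω‖ ^ p + ‖g ω‖ ^ p) - (‖f ω + g ω‖ ^ p + ‖f ω - g ω‖ ^ p)) ∂μ = 0 := by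
        rw [integral_sub iT iS, integral_const_mul,
          integral_add i3 i4, integral_add i1 i2]
        rw [e1, e2, e3, e4] at hnorm
        linarith
      have hae0 := (integral_eq_zero_iff_of_nonneg hDnn hD).1 hDint
      filter_upwards [hae0] with ω hω
      have hω' : ‖f ω + g ω‖ ^ p + ‖f ω - g ω‖ ^ p = 2 * (‖f ω‖ ^ p + ‖g ω‖ ^ p) := by
        have := hω
        simp only [Pi.zero_apply] at this
        linarith [this]
      exact pointwise_converse hp1 hp2 hω'
    · have hD : Integrable
          (fun ω => (‖f ω + g ω‖ ^ p + ‖f ω - g ω‖ ^ p) - 2 * (‖f ω‖ ^ p + ‖g ω‖ ^ p)) μ :=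
        iS.sub iT
      have hDnn : 0 ≤ fun ω =>
          (‖f ω + g ω‖ ^ p + ‖f ω - g ω‖ ^ p) - 2 * (‖f ω‖ ^ p + ‖g ω‖ ^ p) :=
        fun ω => sub_nonneg.2 (pointwise_ge hp1 hgt (f ω) (g ω))
      have hDint : ∫ ω,
          ((‖f ω + g ω‖ ^ p + ‖f ω - g ω‖ ^ p) - 2 * (‖f ω‖ ^ p + ‖g ω‖ ^ p)) ∂μ = 0 := by
        rw [integral_sub iS iT, integral_const_mul,
          integral_add i3 i4, integral_add i1 i2]
        rw [e1, e2, e3, e4] at hnorm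
        linarith
      have hae0 := (integral_eq_zero_iff_of_nonneg hDnn hD).1 hDint
      filter_upwards [hae0] with ω hω
      have hω' : ‖f ω + g ω‖ ^ p + ‖f ω - g ω‖ ^ p = 2 * (‖f ω‖ ^ p + ‖g ω‖ ^ p) := by
        have := hω
        simp only [Pi.zero_apply] at this
        linarith [this]
      exact pointwise_converse hp1 hp2 hω'
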